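/- arXiv:1504.05467 — 2 statements merged into one kernel-verified Lean document; each statement's English description precedes it below -/
import Mathlib

section
/- Goldstein dead-end elimination criterion: fix a residue i ∈ V and two rotamers l, k ∈ D(i). If S_i(l) − S_i(k) + Σ_{j∈V, j≠i} min_{m∈D(j)} [P_{ij}(l,m) − P_{ij}(k,m)] > 0, then no energy-minimizing assignment R (i.e., no R with G(R) = min_{R'} G(R')) satisfies R(i) = l. -/
open scoped BigOperators

variable {V : Type*} [Fintype V] [LinearOrder V]
  {D : V → Type*} [∀ i, Fintype (D i)] [∀ i, Nonempty (D i)]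

/-- Energy of the monomer side-chain packing problem:
`G(R) = Σ_{i∈V} S_i(R(i)) + Σ_{{i,j}, i≠j} P_{ij}(R(i),R(j))`, the second sum ranging
over unordered pairs of distinct residues (each such pair `{i,j}` represented once,
with `i < j` in a fixed linear order on `V`). -/
def energyM (S : ∀ i, D i → ℝ) (P : ∀ i j, D i → D j → ℝ) (R : ∀ i, D i) : ℝ :=
  (∑ i, S i (R i))
    + ∑ p ∈ Finset.univ.filter (fun p : V × V => p.1 < p.2), P p.1 p.2 (R p.1) (R p.2)

/-- Goldstein dead-end elimination criterion.  Fix a residue `i ∈ V` and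
rotamers `l, k ∈ D(i)`.  If
`S_i(l) − S_i(k) + Σ_{j≠i} min_{m∈D(j)} [P_{ij}(l,m) − P_{ij}(k,m)] > 0`,
then no energy-minimizing assignment `R` satisfies `R(i) = l`. -/
theorem goldstein_dee
    (S : ∀ i, D i → ℝ) (P : ∀ i j, D i → D j → ℝ)
    (hsymm : ∀ i j l m, P i j l m = P j i m l)
    (i : V) (l k : D i)
    (hcrit : 0 < S i l - S i k
        + ∑ j ∈ Finset.univ.erase i, ⨅ m : D j, (P i j l m - P i j k m)) :
    ∀ R : ∀ v, D v, energyM S P R = (⨅ R' : ∀ v, D v, energyM S P R') → R i ≠ l := by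
  intro R hmin hRl
  set R' : ∀ v, D v := Function.update R i k with hR'def
  have hR'i : R' i = k := Function.update_self i k R
  have hR'j : ∀ j, j ≠ i → R' j = R j := fun j hj => Function.update_of_ne hj k R
  set g : V → ℝ := fun j => P i j l (R j) - P i j k (R j) with hgdef
  -- energy identity
  have h1 : ∑ j, S j (R j) = ∑ j, S j (R' j) + (S i l - S i k) := by
    rw [← Finset.sum_erase_add _ _ (Finset.mem_univ i),
        ← Finset.sum_erase_add _ (fun j => S j (R' j)) (Finset.mem_univ i)]
    have he : ∑ j ∈ Finset.univ.erase i, S j (R j)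
         = ∑ j ∈ Finset.univ.erase i, S j (R' j) := by
      refine Finset.sum_congr rfl fun j hj => ?_
      rw [hR'j j (Finset.ne_of_mem_erase hj)]
    rw [he, hR'i, hRl]; ring
  have h2 : ∑ p ∈ Finset.univ.filter (fun p : V × V => p.1 < p.2), P p.1 p.2 (R p.1) (R p.2)
      - ∑ p ∈ Finset.univ.filter (fun p : V × V => p.1 < p.2), P p.1 p.2 (R' p.1) (R' p.2)
      = ∑ j ∈ Finset.univ.erase i, g j := by
    rw [← Finset.sum_sub_distrib, Finset.sum_filter, Fintype.sum_prod_type]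
    have hinner : ∀ a, a ≠ i →
        (∑ b, if a < b then P a b (R a) (R b) - P a b (R' a) (R' b) else 0)
          = if a < i then g a else 0 := by
      intro a ha
      rw [Finset.sum_eq_single_of_mem i (Finset.mem_univ i)]
      · rw [hR'j a ha, hR'i, hRl, hgdef]
        by_cases hai : a < i
        · simp only [hai, if_true]
          rw [hsymm i a l (R a), hsymm i a k (R a)]
        · simp [hai]
      · intro b _ hb
        rw [hR'j a ha, hR'j b hb, sub_self, ite_self]
    have hitop : (∑ b, if i < b then P i b (R i) (R b) - P i b (R' i) (R' b) else 0)
        = ∑ b ∈ Finset.univ.erase i, if i < b then g b else 0 := by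
      rw [← Finset.add_sum_erase _ _ (Finset.mem_univ i)]
      simp only [lt_irrefl, if_false, zero_add]
      refine Finset.sum_congr rfl fun b hb => ?_
      rw [hR'j b (Finset.ne_of_mem_erase hb), hR'i, hRl]
    rw [← Finset.add_sum_erase _ _ (Finset.mem_univ i), hitop,
        Finset.sum_congr rfl (fun a ha => hinner a (Finset.ne_of_mem_erase ha)),
        ← Finset.sum_add_distrib]
    refine Finset.sum_congr rfl fun a ha => ?_
    rcases lt_trichotomy i a with h | h | h
    · simp [h, not_lt.mpr h.le]
    · exact absurd h.symm (Finset.ne_of_mem_erase ha)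
    · simp [h, not_lt.mpr h.le]
  have key : energyM S P R = energyM S P R' + ((S i l - S i k)
      + ∑ j ∈ Finset.univ.erase i, g j) := by
    unfold energyM
    rw [h1, ← h2]; ring
  have hsum : ∑ j ∈ Finset.univ.erase i, (⨅ m : D j, (P i j l m - P i j k m))
      ≤ ∑ j ∈ Finset.univ.erase i, g j := by
    refine Finset.sum_le_sum fun j _ => ?_
    exact ciInf_le (Set.Finite.bddBelow (Set.finite_range _)) (R j)
  have hlt : energyM S P R' < energyM S P R := by
    rw [key]; linarith
  have hle : energyM S P R ≤ energyM S P R' := by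
    rw [hmin]
    exact ciInf_le (Set.Finite.bddBelow (Set.finite_range _)) R'
  linarith
end

section
/- Split dead-end elimination criterion: fix a residue i ∈ V, a rotamer l ∈ D(i), and a splitting residue s ∈ V with s ≠ i. Suppose that for every rotamer m ∈ D(s) there exists a rotamer k ∈ D(i) such that S_i(l) − S_i(k) + (P_{is}(l,m) − P_{is}(k,m)) + Σ_{j∈V, j∉{i,s}} min_{t∈D(j)} [P_{ij}(l,t) − P_{ij}(k,t)] > 0. Then no energy-minimizing assignment R satisfies R(i) = l. -/
open scoped BigOperators

variable {V : Type*} [Fintype V] [LinearOrder V]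
  {D : V → Type*} [∀ i, Fintype (D i)] [∀ i, Nonempty (D i)]

lemma energyM_pair_eq (S : ∀ i, D i → ℝ) (P : ∀ i j, D i → D j → ℝ) (R : ∀ i, D i) :
    energyM S P R = (∑ i, S i (R i)) +
      ∑ x, ∑ y, if x < y then P x y (R x) (R y) else 0 := by
  unfold energyM
  congr 1
  rw [Finset.sum_filter, Fintype.sum_prod_type]

/-- split dead-end elimination criterion.  Fix a residue `i ∈ V`, a
rotamer `l ∈ D(i)` and a splitting residue `s ≠ i`.  If for every `m ∈ D(s)` there is a
rotamer `k ∈ D(i)` with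
`S_i(l) − S_i(k) + (P_{is}(l,m) − P_{is}(k,m))
  + Σ_{j∉{i,s}} min_{t∈D(j)} [P_{ij}(l,t) − P_{ij}(k,t)] > 0`,
then no energy-minimizing assignment `R` satisfies `R(i) = l`. -/
theorem split_dee
    (S : ∀ i, D i → ℝ) (P : ∀ i j, D i → D j → ℝ)
    (hsymm : ∀ i j l m, P i j l m = P j i m l)
    (i : V) (l : D i) (s : V) (hs : s ≠ i)
    (hcrit : ∀ m : D s, ∃ k : D i,
      0 < S i l - S i k + (P i s l m - P i s k m)
        + ∑ j ∈ (Finset.univ.erase i).erase s, ⨅ t : D j, (P i j l t - P i j k t)) :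
    ∀ R : ∀ v, D v, energyM S P R = (⨅ R' : ∀ v, D v, energyM S P R') → R i ≠ l := by
  intro R hR hRl
  obtain ⟨k, hk⟩ := hcrit (R s)
  set R' : ∀ v, D v := Function.update R i k with hR'def
  have hR'i : R' i = k := Function.update_self _ _ _
  have hR'j : ∀ j, j ≠ i → R' j = R j := fun j hj => Function.update_of_ne hj _ _
  set c : V → ℝ := fun j => P i j l (R j) - P i j k (R j) with hc
  have key : energyM S P R - energyM S P R' =
      (S i l - S i k) + ∑ j ∈ Finset.univ.erase i, c j := by
    rw [energyM_pair_eq, energyM_pair_eq]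
    have h1 : (∑ v, S v (R v)) - ∑ v, S v (R' v) = S i l - S i k := by
      rw [← Finset.sum_sub_distrib, Finset.sum_eq_single i]
      · rw [hR'i, hRl]
      · intro j _ hj; rw [hR'j j hj]; ring
      · simp
    set Δ : V → V → ℝ := fun x y =>
      (if x < y then P x y (R x) (R y) else 0) -
      (if x < y then P x y (R' x) (R' y) else 0) with hΔ
    have h2 : (∑ x, ∑ y, if x < y then P x y (R x) (R y) else 0)
        - (∑ x, ∑ y, if x < y then P x y (R' x) (R' y) else 0)
        = ∑ j ∈ Finset.univ.erase i, c j := by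
      rw [← Finset.sum_sub_distrib]
      have : ∀ x, ((∑ y, if x < y then P x y (R x) (R y) else 0)
          - ∑ y, if x < y then P x y (R' x) (R' y) else 0) = ∑ y, Δ x y := by
        intro x; rw [← Finset.sum_sub_distrib]
      simp_rw [this]
      rw [← Finset.add_sum_erase _ _ (Finset.mem_univ i)]
      have hΔii : Δ i i = 0 := by simp [hΔ]
      have hΔoff : ∀ x y, x ≠ i → y ≠ i → Δ x y = 0 := by
        intro x y hx hy
        simp [hΔ, hR'j x hx, hR'j y hy]
      have hrow : (∑ y, Δ i y) = ∑ y ∈ Finset.univ.erase i, Δ i y := by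
        rw [← Finset.add_sum_erase _ _ (Finset.mem_univ i), hΔii, zero_add]
      have hcol : ∀ x, x ≠ i → (∑ y, Δ x y) = Δ x i := by
        intro x hx
        rw [← Finset.add_sum_erase _ _ (Finset.mem_univ i)]
        rw [Finset.sum_eq_zero, add_zero]
        intro y hy
        exact hΔoff x y hx (Finset.ne_of_mem_erase hy)
      rw [hrow, Finset.sum_congr rfl (fun x hx => hcol x (Finset.ne_of_mem_erase hx)),
        ← Finset.sum_add_distrib]
      apply Finset.sum_congr rfl
      intro j hj
      have hji : j ≠ i := Finset.ne_of_mem_erase hj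
      have hRj : R' j = R j := hR'j j hji
      rcases lt_trichotomy i j with h | h | h
      · have h' : ¬ j < i := not_lt_of_gt h
        simp [hΔ, hc, h, h', hRj, hR'i, hRl]
      · exact absurd h.symm hji
      · have h' : ¬ i < j := not_lt_of_gt h
        simp only [hΔ, hc, h, h', if_pos, if_neg, sub_zero, zero_sub, if_true, if_false]
        rw [hRj, hR'i, hRl, hsymm j i (R j) l, hsymm j i (R j) k]
        ring
    rw [← h1, ← h2]; ring
  have hsmem : s ∈ Finset.univ.erase i := Finset.mem_erase.mpr ⟨hs, Finset.mem_univ s⟩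
  have hsplit : ∑ j ∈ Finset.univ.erase i, c j
      = c s + ∑ j ∈ (Finset.univ.erase i).erase s, c j :=
    (Finset.add_sum_erase _ _ hsmem).symm
  have hbound : ∀ j ∈ (Finset.univ.erase i).erase s,
      (⨅ t : D j, (P i j l t - P i j k t)) ≤ c j := by
    intro j _
    exact ciInf_le (Set.Finite.bddBelow (Set.finite_range _)) (R j)
  have hsum_le : (∑ j ∈ (Finset.univ.erase i).erase s, ⨅ t : D j, (P i j l t - P i j k t))
      ≤ ∑ j ∈ (Finset.univ.erase i).erase s, c j := Finset.sum_le_sum hbound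
  have hpos : 0 < energyM S P R - energyM S P R' := by
    rw [key, hsplit]
    have : c s = P i s l (R s) - P i s k (R s) := rfl
    nlinarith [hk, hsum_le]
  have hle : (⨅ R'' : ∀ v, D v, energyM S P R'') ≤ energyM S P R' :=
    ciInf_le (Set.Finite.bddBelow (Set.finite_range _)) R'
  rw [← hR] at hle
  linarith
end
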